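/- If (L,α_L) is a perfect Hom-Leibniz algebra (L = [L,L]), then the central extension ψ_L: (L∗L, α_{L∗L}) → (L,α_L), ψ_L(l∗l') = [l,l'], is the universal central extension of (L,α_L): for every central extension φ: (C,α_C) → (L,α_L) there exists a unique Hom-Leibniz homomorphism f: (L∗L,α_{L∗L}) → (C,α_C) with φ∘f = ψ_L. -/

import Mathlib

/-- A multiplicative Hom-Leibniz algebra structure. -/
def IsHomLeibniz {𝕜 L : Type*} [Field 𝕜] [AddCommGroup L] [Module 𝕜 L]
    (br : L →ₗ[𝕜] L →ₗ[𝕜] L) (α : L →ₗ[𝕜] L) : Prop :=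
  (∀ x y z, br (α x) (br y z) = br (br x y) (α z) - br (br x z) (α y)) ∧
  (∀ x y, α (br x y) = br (α x) (α y))

/-- A Hom-Leibniz action of `(L,α_L)` on `(M,α_M)` (axioms (a)–(h)). -/
def IsHomLeibnizAction {𝕜 L M : Type*} [Field 𝕜] [AddCommGroup L] [Module 𝕜 L]
    [AddCommGroup M] [Module 𝕜 M]
    (brL : L →ₗ[𝕜] L →ₗ[𝕜] L) (αL : L →ₗ[𝕜] L)
    (brM : M →ₗ[𝕜] M →ₗ[𝕜] M) (αM : M →ₗ[𝕜] M)
    (l : L →ₗ[𝕜] M →ₗ[𝕜] M) (r : M →ₗ[𝕜] L →ₗ[𝕜] M) : Prop :=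
  (∀ x y m, r (αM m) (brL x y) = r (r m x) (αL y) - r (r m y) (αL x)) ∧
  (∀ x y m, l (brL x y) (αM m) = r (l x m) (αL y) - l (αL x) (r m y)) ∧
  (∀ x y m, l (αL x) (l y m) = - l (αL x) (r m y)) ∧
  (∀ x m m', l (αL x) (brM m m') = brM (l x m) (αM m') - brM (l x m') (αM m)) ∧
  (∀ x m m', r (brM m m') (αL x) = brM (r m x) (αM m') + brM (αM m) (r m' x)) ∧
  (∀ x m m', brM (αM m) (l x m') = - brM (αM m) (r m' x)) ∧
  (∀ x m, αM (l x m) = l (αL x) (αM m)) ∧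
  (∀ x m, αM (r m x) = r (αM m) (αL x))

section Tensor

variable {𝕜 M N : Type*} [Field 𝕜] [AddCommGroup M] [Module 𝕜 M]
  [AddCommGroup N] [Module 𝕜 N]

/-- The generator `m ∗ n` in the free module on symbols. -/
noncomputable def g1 (𝕜 : Type*) [Field 𝕜] {M N : Type*} [AddCommGroup M] [Module 𝕜 M]
    [AddCommGroup N] [Module 𝕜 N] (m : M) (n : N) : ((M × N) ⊕ (N × M)) →₀ 𝕜 :=
  Finsupp.single (Sum.inl (m, n)) 1

/-- The generator `n ∗ m` in the free module on symbols. -/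
noncomputable def g2 (𝕜 : Type*) [Field 𝕜] {M N : Type*} [AddCommGroup M] [Module 𝕜 M]
    [AddCommGroup N] [Module 𝕜 N] (n : N) (m : M) : ((M × N) ⊕ (N × M)) →₀ 𝕜 :=
  Finsupp.single (Sum.inr (n, m)) 1

/-- The defining relations of the non-abelian Hom-Leibniz tensor product `M ∗ N`:
bilinearity of `∗` in each variable, and the structural relations (1) of the paper.
Here `ml m n = ^m n`, `mr n m = n^m` (action of `M` on `N`) and `nl n m = ^n m`,
`nr m n = m^n` (action of `N` on `M`). -/
def tensorRel (brM : M →ₗ[𝕜] M →ₗ[𝕜] M) (brN : N →ₗ[𝕜] N →ₗ[𝕜] N)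
    (αM : M →ₗ[𝕜] M) (αN : N →ₗ[𝕜] N)
    (ml : M →ₗ[𝕜] N →ₗ[𝕜] N) (mr : N →ₗ[𝕜] M →ₗ[𝕜] N)
    (nl : N →ₗ[𝕜] M →ₗ[𝕜] M) (nr : M →ₗ[𝕜] N →ₗ[𝕜] M) :
    Set (((M × N) ⊕ (N × M)) →₀ 𝕜) :=
  {z |
    (∃ (c : 𝕜) (m : M) (n : N), z = g1 𝕜 (c • m) n - c • g1 𝕜 m n) ∨
    (∃ (c : 𝕜) (m : M) (n : N), z = g1 𝕜 m (c • n) - c • g1 𝕜 m n) ∨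
    (∃ (c : 𝕜) (n : N) (m : M), z = g2 𝕜 (c • n) m - c • g2 𝕜 n m) ∨
    (∃ (c : 𝕜) (n : N) (m : M), z = g2 𝕜 n (c • m) - c • g2 𝕜 n m) ∨
    (∃ (m m' : M) (n : N), z = g1 𝕜 (m + m') n - g1 𝕜 m n - g1 𝕜 m' n) ∨
    (∃ (m : M) (n n' : N), z = g1 𝕜 m (n + n') - g1 𝕜 m n - g1 𝕜 m n') ∨
    (∃ (n n' : N) (m : M), z = g2 𝕜 (n + n') m - g2 𝕜 n m - g2 𝕜 n' m) ∨
    (∃ (n : N) (m m' : M), z = g2 𝕜 n (m + m') - g2 𝕜 n m - g2 𝕜 n m') ∨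
    (∃ (m : M) (n n' : N),
      z = g1 𝕜 (αM m) (brN n n') - g1 𝕜 (nr m n) (αN n') + g1 𝕜 (nr m n') (αN n)) ∨
    (∃ (n : N) (m m' : M),
      z = g2 𝕜 (αN n) (brM m m') - g2 𝕜 (mr n m) (αM m') + g2 𝕜 (mr n m') (αM m)) ∨
    (∃ (m m' : M) (n : N),
      z = g1 𝕜 (brM m m') (αN n) - g2 𝕜 (ml m n) (αM m') + g1 𝕜 (αM m) (mr n m')) ∨
    (∃ (n n' : N) (m : M),
      z = g2 𝕜 (brN n n') (αM m) - g1 𝕜 (nl n m) (αN n') + g2 𝕜 (αN n) (nr m n')) ∨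
    (∃ (m m' : M) (n : N), z = g1 𝕜 (αM m) (ml m' n) + g1 𝕜 (αM m) (mr n m')) ∨
    (∃ (n n' : N) (m : M), z = g2 𝕜 (αN n) (nl n' m) + g2 𝕜 (αN n) (nr m n')) ∨
    (∃ (m m' : M) (n n' : N), z = g1 𝕜 (nr m n) (ml m' n') - g2 𝕜 (ml m n) (nr m' n')) ∨
    (∃ (m m' : M) (n n' : N), z = g1 𝕜 (nr m n) (mr n' m') - g2 𝕜 (ml m n) (nl n' m')) ∨
    (∃ (m m' : M) (n n' : N), z = g1 𝕜 (nl n m) (ml m' n') - g2 𝕜 (mr n m) (nr m' n')) ∨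
    (∃ (m m' : M) (n n' : N), z = g1 𝕜 (nl n m) (mr n' m') - g2 𝕜 (mr n m) (nl n' m'))}

/-- The underlying vector space of the non-abelian Hom-Leibniz tensor product `M ∗ N`. -/
abbrev HomTensor (brM : M →ₗ[𝕜] M →ₗ[𝕜] M) (brN : N →ₗ[𝕜] N →ₗ[𝕜] N)
    (αM : M →ₗ[𝕜] M) (αN : N →ₗ[𝕜] N)
    (ml : M →ₗ[𝕜] N →ₗ[𝕜] N) (mr : N →ₗ[𝕜] M →ₗ[𝕜] N)
    (nl : N →ₗ[𝕜] M →ₗ[𝕜] M) (nr : M →ₗ[𝕜] N →ₗ[𝕜] M) : Type _ :=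
  (((M × N) ⊕ (N × M)) →₀ 𝕜) ⧸ Submodule.span 𝕜 (tensorRel brM brN αM αN ml mr nl nr)

/-- The class of the generator `m ∗ n` in `M ∗ N`. -/
noncomputable def t1 (brM : M →ₗ[𝕜] M →ₗ[𝕜] M) (brN : N →ₗ[𝕜] N →ₗ[𝕜] N)
    (αM : M →ₗ[𝕜] M) (αN : N →ₗ[𝕜] N)
    (ml : M →ₗ[𝕜] N →ₗ[𝕜] N) (mr : N →ₗ[𝕜] M →ₗ[𝕜] N)
    (nl : N →ₗ[𝕜] M →ₗ[𝕜] M) (nr : M →ₗ[𝕜] N →ₗ[𝕜] M)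
    (m : M) (n : N) : HomTensor brM brN αM αN ml mr nl nr :=
  Submodule.Quotient.mk (g1 𝕜 m n)

/-- The class of the generator `n ∗ m` in `M ∗ N`. -/
noncomputable def t2 (brM : M →ₗ[𝕜] M →ₗ[𝕜] M) (brN : N →ₗ[𝕜] N →ₗ[𝕜] N)
    (αM : M →ₗ[𝕜] M) (αN : N →ₗ[𝕜] N)
    (ml : M →ₗ[𝕜] N →ₗ[𝕜] N) (mr : N →ₗ[𝕜] M →ₗ[𝕜] N)
    (nl : N →ₗ[𝕜] M →ₗ[𝕜] M) (nr : M →ₗ[𝕜] N →ₗ[𝕜] M)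
    (n : N) (m : M) : HomTensor brM brN αM αN ml mr nl nr :=
  Submodule.Quotient.mk (g2 𝕜 n m)

/-- Compatibility of mutual Hom-Leibniz actions of `(M,α_M)` and `(N,α_N)`. -/
def CompatibleActions (brM : M →ₗ[𝕜] M →ₗ[𝕜] M) (brN : N →ₗ[𝕜] N →ₗ[𝕜] N)
    (ml : M →ₗ[𝕜] N →ₗ[𝕜] N) (mr : N →ₗ[𝕜] M →ₗ[𝕜] N)
    (nl : N →ₗ[𝕜] M →ₗ[𝕜] M) (nr : M →ₗ[𝕜] N →ₗ[𝕜] M) : Prop :=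
  (∀ (m m' : M) (n : N), nl (ml m n) m' = brM (nr m n) m') ∧
  (∀ (m m' : M) (n : N), nl (mr n m) m' = brM (nl n m) m') ∧
  (∀ (m m' : M) (n : N), nr m (ml m' n) = brM m (nr m' n)) ∧
  (∀ (m m' : M) (n : N), nr m (mr n m') = brM m (nl n m')) ∧
  (∀ (n n' : N) (m : M), ml (nl n m) n' = brN (mr n m) n') ∧
  (∀ (n n' : N) (m : M), ml (nr m n) n' = brN (ml m n) n') ∧
  (∀ (n n' : N) (m : M), mr n (nl n' m) = brN n (mr n' m)) ∧
  (∀ (n n' : N) (m : M), mr n (nr m n') = brN n (ml m n'))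

end Tensor

section Aux

variable {𝕜 L : Type*} [Field 𝕜] [AddCommGroup L] [Module 𝕜 L]
variable (brL : L →ₗ[𝕜] L →ₗ[𝕜] L) (αL : L →ₗ[𝕜] L)

lemma rel_mk_zero {z : ((L × L) ⊕ (L × L)) →₀ 𝕜}
    (hz : z ∈ tensorRel brL brL αL αL brL brL brL brL) :
    (Submodule.Quotient.mk z : HomTensor brL brL αL αL brL brL brL brL) = 0 :=
  (Submodule.Quotient.mk_eq_zero _).2 (Submodule.subset_span hz)

lemma t1_smul_left (c : 𝕜) (m n : L) :
    t1 brL brL αL αL brL brL brL brL (c • m) n = c • t1 brL brL αL αL brL brL brL brL m n := by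
  have h := rel_mk_zero brL αL (z := g1 𝕜 (c • m) n - c • g1 𝕜 m n)
    (Or.inl ⟨c, m, n, rfl⟩)
  rw [Submodule.Quotient.mk_sub, Submodule.Quotient.mk_smul, sub_eq_zero] at h
  exact h

lemma t1_smul_right (c : 𝕜) (m n : L) :
    t1 brL brL αL αL brL brL brL brL m (c • n) = c • t1 brL brL αL αL brL brL brL brL m n := by
  have h := rel_mk_zero brL αL (z := g1 𝕜 m (c • n) - c • g1 𝕜 m n)
    (Or.inr (Or.inl ⟨c, m, n, rfl⟩))
  rw [Submodule.Quotient.mk_sub, Submodule.Quotient.mk_smul, sub_eq_zero] at h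
  exact h

lemma t2_smul_left (c : 𝕜) (n m : L) :
    t2 brL brL αL αL brL brL brL brL (c • n) m = c • t2 brL brL αL αL brL brL brL brL n m := by
  have h := rel_mk_zero brL αL (z := g2 𝕜 (c • n) m - c • g2 𝕜 n m)
    (Or.inr (Or.inr (Or.inl ⟨c, n, m, rfl⟩)))
  rw [Submodule.Quotient.mk_sub, Submodule.Quotient.mk_smul, sub_eq_zero] at h
  exact h

lemma t2_smul_right (c : 𝕜) (n m : L) :
    t2 brL brL αL αL brL brL brL brL n (c • m) = c • t2 brL brL αL αL brL brL brL brL n m := by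
  have h := rel_mk_zero brL αL (z := g2 𝕜 n (c • m) - c • g2 𝕜 n m)
    (Or.inr (Or.inr (Or.inr (Or.inl ⟨c, n, m, rfl⟩))))
  rw [Submodule.Quotient.mk_sub, Submodule.Quotient.mk_smul, sub_eq_zero] at h
  exact h

lemma t1_add_left (m m' n : L) :
    t1 brL brL αL αL brL brL brL brL (m + m') n =
      t1 brL brL αL αL brL brL brL brL m n + t1 brL brL αL αL brL brL brL brL m' n := by
  have h := rel_mk_zero brL αL (z := g1 𝕜 (m + m') n - g1 𝕜 m n - g1 𝕜 m' n)
    (Or.inr (Or.inr (Or.inr (Or.inr (Or.inl ⟨m, m', n, rfl⟩)))))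
  rw [Submodule.Quotient.mk_sub, Submodule.Quotient.mk_sub, sub_sub, sub_eq_zero] at h
  exact h

lemma t1_add_right (m n n' : L) :
    t1 brL brL αL αL brL brL brL brL m (n + n') =
      t1 brL brL αL αL brL brL brL brL m n + t1 brL brL αL αL brL brL brL brL m n' := by
  have h := rel_mk_zero brL αL (z := g1 𝕜 m (n + n') - g1 𝕜 m n - g1 𝕜 m n')
    (Or.inr (Or.inr (Or.inr (Or.inr (Or.inr (Or.inl ⟨m, n, n', rfl⟩))))))
  rw [Submodule.Quotient.mk_sub, Submodule.Quotient.mk_sub, sub_sub, sub_eq_zero] at h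
  exact h

lemma t2_add_left (n n' m : L) :
    t2 brL brL αL αL brL brL brL brL (n + n') m =
      t2 brL brL αL αL brL brL brL brL n m + t2 brL brL αL αL brL brL brL brL n' m := by
  have h := rel_mk_zero brL αL (z := g2 𝕜 (n + n') m - g2 𝕜 n m - g2 𝕜 n' m)
    (Or.inr (Or.inr (Or.inr (Or.inr (Or.inr (Or.inr (Or.inl ⟨n, n', m, rfl⟩)))))))
  rw [Submodule.Quotient.mk_sub, Submodule.Quotient.mk_sub, sub_sub, sub_eq_zero] at h
  exact h

lemma t2_add_right (n m m' : L) :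
    t2 brL brL αL αL brL brL brL brL n (m + m') =
      t2 brL brL αL αL brL brL brL brL n m + t2 brL brL αL αL brL brL brL brL n m' := by
  have h := rel_mk_zero brL αL (z := g2 𝕜 n (m + m') - g2 𝕜 n m - g2 𝕜 n m')
    (Or.inr (Or.inr (Or.inr (Or.inr (Or.inr (Or.inr (Or.inr (Or.inl ⟨n, m, m', rfl⟩))))))))
  rw [Submodule.Quotient.mk_sub, Submodule.Quotient.mk_sub, sub_sub, sub_eq_zero] at h
  exact h

/-- Relation (15) with `L` acting on itself: `t1` and `t2` agree on pairs of brackets. -/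
lemma t2_bracket_eq_t1 (m n m' n' : L) :
    t2 brL brL αL αL brL brL brL brL (brL m n) (brL m' n') =
      t1 brL brL αL αL brL brL brL brL (brL m n) (brL m' n') := by
  have h := rel_mk_zero brL αL
    (z := g1 𝕜 (brL m n) (brL m' n') - g2 𝕜 (brL m n) (brL m' n'))
    (Or.inr (Or.inr (Or.inr (Or.inr (Or.inr (Or.inr (Or.inr (Or.inr (Or.inr (Or.inr (Or.inr
      (Or.inr (Or.inr (Or.inr (Or.inl ⟨m, m', n, n', rfl⟩)))))))))))))))
  rw [Submodule.Quotient.mk_sub, sub_eq_zero] at h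
  exact h.symm

/-- The generator map `t1` as a bilinear map. -/
noncomputable def T1 : L →ₗ[𝕜] L →ₗ[𝕜] HomTensor brL brL αL αL brL brL brL brL :=
  LinearMap.mk₂ 𝕜 (t1 brL brL αL αL brL brL brL brL)
    (t1_add_left brL αL) (t1_smul_left brL αL) (t1_add_right brL αL) (t1_smul_right brL αL)

/-- The generator map `t2` as a bilinear map. -/
noncomputable def T2 : L →ₗ[𝕜] L →ₗ[𝕜] HomTensor brL brL αL αL brL brL brL brL :=
  LinearMap.mk₂ 𝕜 (t2 brL brL αL αL brL brL brL brL)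
    (t2_add_left brL αL) (t2_smul_left brL αL) (t2_add_right brL αL) (t2_smul_right brL αL)

@[simp] lemma T1_apply (a b : L) :
    T1 brL αL a b = t1 brL brL αL αL brL brL brL brL a b := rfl

@[simp] lemma T2_apply (a b : L) :
    T2 brL αL a b = t2 brL brL αL αL brL brL brL brL a b := rfl

/-- The classes of the generators span the whole tensor square. -/
lemma gen_span :
    Submodule.span 𝕜 {x : HomTensor brL brL αL αL brL brL brL brL |
      (∃ a b, x = t1 brL brL αL αL brL brL brL brL a b) ∨
      (∃ a b, x = t2 brL brL αL αL brL brL brL brL a b)} = ⊤ := by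
  rw [eq_top_iff]
  rintro x -
  obtain ⟨p, rfl⟩ := Submodule.Quotient.mk_surjective _ x
  induction p using Finsupp.induction with
  | zero =>
      rw [show (Submodule.Quotient.mk (0 : ((L × L) ⊕ (L × L)) →₀ 𝕜) :
        HomTensor brL brL αL αL brL brL brL brL) = 0 from rfl]
      exact Submodule.zero_mem _
  | single_add i c p hi hc ih =>
      rw [Submodule.Quotient.mk_add]
      refine Submodule.add_mem _ ?_ ih
      obtain (⟨m, n⟩ | ⟨n, m⟩) := i
      · have e : (Finsupp.single (Sum.inl (m, n)) c : ((L × L) ⊕ (L × L)) →₀ 𝕜)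
            = c • g1 𝕜 m n := by
          simp [g1, Finsupp.smul_single]
        rw [e, Submodule.Quotient.mk_smul]
        exact Submodule.smul_mem _ _ (Submodule.subset_span (Or.inl ⟨m, n, rfl⟩))
      · have e : (Finsupp.single (Sum.inr (n, m)) c : ((L × L) ⊕ (L × L)) →₀ 𝕜)
            = c • g2 𝕜 n m := by
          simp [g2, Finsupp.smul_single]
        rw [e, Submodule.Quotient.mk_smul]
        exact Submodule.smul_mem _ _ (Submodule.subset_span (Or.inr ⟨n, m, rfl⟩))

end Aux

section Aux2

variable {𝕜 L : Type*} [Field 𝕜] [AddCommGroup L] [Module 𝕜 L]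
variable (brL : L →ₗ[𝕜] L →ₗ[𝕜] L) (αL : L →ₗ[𝕜] L)

lemma t1_zero_left (n : L) : t1 brL brL αL αL brL brL brL brL 0 n = 0 := by
  simpa using t1_smul_left brL αL (0 : 𝕜) 0 n

lemma t1_zero_right (m : L) : t1 brL brL αL αL brL brL brL brL m 0 = 0 := by
  simpa using t1_smul_right brL αL (0 : 𝕜) m 0

lemma t2_zero_left (m : L) : t2 brL brL αL αL brL brL brL brL 0 m = 0 := by
  simpa using t2_smul_left brL αL (0 : 𝕜) 0 m

lemma t2_zero_right (n : L) : t2 brL brL αL αL brL brL brL brL n 0 = 0 := by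
  simpa using t2_smul_right brL αL (0 : 𝕜) n 0

end Aux2
set_option maxHeartbeats 1600000

/-- If `(L,α_L)` is a perfect Hom-Leibniz algebra, then
`ψ_L : (L∗L, α_{L∗L}) → (L,α_L)`, `ψ_L(l∗l') = [l,l']`, is a universal central extension:
`ψ_L` is a surjective homomorphism with kernel contained in the center of `L∗L`, and for
every central extension `φ : (C,α_C) → (L,α_L)` there is a unique Hom-Leibniz
homomorphism `f : L∗L → C` with `φ ∘ f = ψ_L`. Here `L` acts on itself by its bracket. -/
theorem tensor_square_universal_central_extension {𝕜 L C : Type*} [Field 𝕜]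
    [AddCommGroup L] [Module 𝕜 L] [AddCommGroup C] [Module 𝕜 C]
    (brL : L →ₗ[𝕜] L →ₗ[𝕜] L) (αL : L →ₗ[𝕜] L) (hL : IsHomLeibniz brL αL)
    (hperf : Submodule.span 𝕜 {z : L | ∃ x y, z = brL x y} = ⊤)
    (Br : HomTensor brL brL αL αL brL brL brL brL →ₗ[𝕜]
      HomTensor brL brL αL αL brL brL brL brL →ₗ[𝕜] HomTensor brL brL αL αL brL brL brL brL)
    (hBr1 : ∀ a b a' b', Br (t1 brL brL αL αL brL brL brL brL a b)
      (t1 brL brL αL αL brL brL brL brL a' b') =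
        t1 brL brL αL αL brL brL brL brL (brL a b) (brL a' b'))
    (hBr2 : ∀ a b a' b', Br (t1 brL brL αL αL brL brL brL brL a b)
      (t2 brL brL αL αL brL brL brL brL a' b') =
        t1 brL brL αL αL brL brL brL brL (brL a b) (brL a' b'))
    (hBr3 : ∀ a b a' b', Br (t2 brL brL αL αL brL brL brL brL a b)
      (t1 brL brL αL αL brL brL brL brL a' b') =
        t1 brL brL αL αL brL brL brL brL (brL a b) (brL a' b'))
    (hBr4 : ∀ a b a' b', Br (t2 brL brL αL αL brL brL brL brL a b)
      (t2 brL brL αL αL brL brL brL brL a' b') =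
        t1 brL brL αL αL brL brL brL brL (brL a b) (brL a' b'))
    (αT : HomTensor brL brL αL αL brL brL brL brL →ₗ[𝕜] HomTensor brL brL αL αL brL brL brL brL)
    (hαT1 : ∀ a b, αT (t1 brL brL αL αL brL brL brL brL a b) =
      t1 brL brL αL αL brL brL brL brL (αL a) (αL b))
    (hαT2 : ∀ a b, αT (t2 brL brL αL αL brL brL brL brL a b) =
      t2 brL brL αL αL brL brL brL brL (αL a) (αL b))
    (ψL : HomTensor brL brL αL αL brL brL brL brL →ₗ[𝕜] L)
    (hψ1 : ∀ a b, ψL (t1 brL brL αL αL brL brL brL brL a b) = brL a b)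
    (hψ2 : ∀ a b, ψL (t2 brL brL αL αL brL brL brL brL a b) = brL a b)
    (brC : C →ₗ[𝕜] C →ₗ[𝕜] C) (αC : C →ₗ[𝕜] C) (hC : IsHomLeibniz brC αC)
    (φ : C →ₗ[𝕜] L) (hφbr : ∀ a b, φ (brC a b) = brL (φ a) (φ b))
    (hφα : ∀ a, φ (αC a) = αL (φ a)) (hφsurj : Function.Surjective φ)
    (hφcentral : ∀ c, φ c = 0 → ∀ c', brC c c' = 0 ∧ brC c' c = 0) :
    Function.Surjective ψL ∧
    (∀ z, ψL z = 0 → ∀ w, Br z w = 0 ∧ Br w z = 0) ∧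
    (∀ a, ψL (αT a) = αL (ψL a)) ∧
    (∀ a b, ψL (Br a b) = brL (ψL a) (ψL b)) ∧
    ∃! f : HomTensor brL brL αL αL brL brL brL brL →ₗ[𝕜] C,
      (∀ a b, f (Br a b) = brC (f a) (f b)) ∧
      (∀ a, f (αT a) = αC (f a)) ∧
      (∀ t, φ (f t) = ψL t) := by
  classical
  have hspan := gen_span brL αL
  -- (1) surjectivity of ψL
  have hsurj : Function.Surjective ψL := by
    rw [← LinearMap.range_eq_top, eq_top_iff, ← hperf, Submodule.span_le]
    rintro z ⟨x, y, rfl⟩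
    exact ⟨t1 brL brL αL αL brL brL brL brL x y, hψ1 x y⟩
  -- Br factors through ψL
  have inner1 : ∀ a b, Br (t1 brL brL αL αL brL brL brL brL a b)
      = (T1 brL αL (ψL (t1 brL brL αL αL brL brL brL brL a b))).comp ψL := by
    intro a b
    apply LinearMap.ext_on hspan
    rintro y (⟨c, d, rfl⟩ | ⟨c, d, rfl⟩) <;>
      simp [hBr1, hBr2, hψ1, hψ2]
  have inner2 : ∀ a b, Br (t2 brL brL αL αL brL brL brL brL a b)
      = (T1 brL αL (ψL (t2 brL brL αL αL brL brL brL brL a b))).comp ψL := by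
    intro a b
    apply LinearMap.ext_on hspan
    rintro y (⟨c, d, rfl⟩ | ⟨c, d, rfl⟩) <;>
      simp [hBr3, hBr4, hψ1, hψ2]
  have hBrψ : ∀ z w, Br z w = t1 brL brL αL αL brL brL brL brL (ψL z) (ψL w) := by
    intro z w
    have outer : Br.flip w = ((T1 brL αL).flip (ψL w)).comp ψL := by
      apply LinearMap.ext_on hspan
      rintro x (⟨a, b, rfl⟩ | ⟨a, b, rfl⟩)
      · simpa using LinearMap.congr_fun (inner1 a b) w
      · simpa using LinearMap.congr_fun (inner2 a b) w
    simpa using LinearMap.congr_fun outer z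
  -- (2) centrality
  have hcent : ∀ z, ψL z = 0 → ∀ w, Br z w = 0 ∧ Br w z = 0 := by
    intro z hz w
    constructor
    · rw [hBrψ, hz, t1_zero_left]
    · rw [hBrψ, hz, t1_zero_right]
  -- (3) ψL is compatible with the twist maps
  have hψα : ∀ a, ψL (αT a) = αL (ψL a) := by
    have h : ψL.comp αT = αL.comp ψL := by
      apply LinearMap.ext_on hspan
      rintro x (⟨a, b, rfl⟩ | ⟨a, b, rfl⟩) <;>
        simp [hαT1, hαT2, hψ1, hψ2, hL.2]
    exact fun a => LinearMap.congr_fun h a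
  -- (4) ψL is a homomorphism
  have hψBr : ∀ a b, ψL (Br a b) = brL (ψL a) (ψL b) := by
    intro a b; rw [hBrψ, hψ1]
  -- (5) construction of f
  choose s hs using hφsurj
  have key : ∀ x x' y y' : C, φ x = φ x' → φ y = φ y' → brC x y = brC x' y' := by
    intro x x' y y' hx hy
    have h1 : brC (x - x') y = 0 :=
      (hφcentral (x - x') (by rw [map_sub, hx, sub_self]) y).1
    have h2 : brC x' (y - y') = 0 :=
      (hφcentral (y - y') (by rw [map_sub, hy, sub_self]) x').2
    have e1 : brC x y = brC (x - x') y + brC x' y := by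
      rw [← LinearMap.add_apply, ← map_add, sub_add_cancel]
    have e2 : brC x' y = brC x' (y - y') + brC x' y' := by
      rw [← map_add, sub_add_cancel]
    rw [e1, h1, zero_add, e2, h2, zero_add]
  set β : L →ₗ[𝕜] L →ₗ[𝕜] C := LinearMap.mk₂ 𝕜 (fun a b => brC (s a) (s b))
    (fun a a' b => by
      show brC (s (a + a')) (s b) = brC (s a) (s b) + brC (s a') (s b)
      rw [key (s (a + a')) (s a + s a') (s b) (s b) (by rw [hs, map_add, hs, hs]) rfl,
        map_add, LinearMap.add_apply])
    (fun c a b => by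
      show brC (s (c • a)) (s b) = c • brC (s a) (s b)
      rw [key (s (c • a)) (c • s a) (s b) (s b) (by rw [hs, map_smul, hs]) rfl,
        map_smul, LinearMap.smul_apply])
    (fun a b b' => by
      show brC (s a) (s (b + b')) = brC (s a) (s b) + brC (s a) (s b')
      rw [key (s a) (s a) (s (b + b')) (s b + s b') rfl (by rw [hs, map_add, hs, hs]),
        map_add])
    (fun c a b => by
      show brC (s a) (s (c • b)) = c • brC (s a) (s b)
      rw [key (s a) (s a) (s (c • b)) (c • s b) rfl (by rw [hs, map_smul, hs]),
        map_smul]) with hβdef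
  have hβ : ∀ a b, β a b = brC (s a) (s b) := fun _ _ => rfl
  have hβφ : ∀ a b, φ (β a b) = brL a b := by
    intro a b; rw [hβ, hφbr, hs, hs]
  have hβeq : ∀ (a b : L) (x y : C), φ x = a → φ y = b → β a b = brC x y := by
    intro a b x y hx hy
    rw [hβ]; exact key _ _ _ _ (by rw [hs, hx]) (by rw [hs, hy])
  have genLeib : ∀ x y z : L,
      β (αL x) (brL y z) = β (brL x y) (αL z) - β (brL x z) (αL y) := by
    intro x y z
    rw [hβeq (αL x) (brL y z) (αC (s x)) (brC (s y) (s z))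
        (by rw [hφα, hs]) (by rw [hφbr, hs, hs]),
      hC.1,
      hβeq (brL x y) (αL z) (brC (s x) (s y)) (αC (s z))
        (by rw [hφbr, hs, hs]) (by rw [hφα, hs]),
      hβeq (brL x z) (αL y) (brC (s x) (s z)) (αC (s y))
        (by rw [hφbr, hs, hs]) (by rw [hφα, hs])]
  set F0 : (((L × L) ⊕ (L × L)) →₀ 𝕜) →ₗ[𝕜] C :=
    Finsupp.linearCombination 𝕜 (fun i => match i with
      | Sum.inl (m, n) => β m n
      | Sum.inr (n, m) => β n m) with hF0def
  have hF0g1 : ∀ m n, F0 (g1 𝕜 m n) = β m n := by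
    intro m n; simp [hF0def, g1, Finsupp.linearCombination_single]
  have hF0g2 : ∀ n m, F0 (g2 𝕜 n m) = β n m := by
    intro n m; simp [hF0def, g2, Finsupp.linearCombination_single]
  have hle : Submodule.span 𝕜 (tensorRel brL brL αL αL brL brL brL brL) ≤ LinearMap.ker F0 := by
    rw [Submodule.span_le]
    rintro z hz
    simp only [SetLike.mem_coe, LinearMap.mem_ker]
    obtain (⟨c,m,n,rfl⟩|⟨c,m,n,rfl⟩|⟨c,n,m,rfl⟩|⟨c,n,m,rfl⟩|⟨m,m',n,rfl⟩|⟨m,n,n',rfl⟩|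
      ⟨n,n',m,rfl⟩|⟨n,m,m',rfl⟩|⟨m,n,n',rfl⟩|⟨n,m,m',rfl⟩|⟨m,m',n,rfl⟩|⟨n,n',m,rfl⟩|
      ⟨m,m',n,rfl⟩|⟨n,n',m,rfl⟩|⟨m,m',n,n',rfl⟩|⟨m,m',n,n',rfl⟩|⟨m,m',n,n',rfl⟩|
      ⟨m,m',n,n',rfl⟩) := hz <;>
      simp only [map_sub, map_add, map_smul, hF0g1, hF0g2,
        LinearMap.smul_apply, LinearMap.add_apply]
    · abel
    · abel
    · abel
    · abel
    · abel
    · abel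
    · abel
    · abel
    · rw [genLeib m n n']; abel
    · rw [genLeib n m m']; abel
    · rw [genLeib m n m']; abel
    · rw [genLeib n m n']; abel
    · rw [genLeib m m' n, genLeib m n m']; abel
    · rw [genLeib n n' m, genLeib n m n']; abel
    · abel
    · abel
    · abel
    · abel
  set f : HomTensor brL brL αL αL brL brL brL brL →ₗ[𝕜] C :=
    Submodule.liftQ _ F0 hle with hfdef
  have hf1 : ∀ a b, f (t1 brL brL αL αL brL brL brL brL a b) = β a b := by
    intro a b
    show f (Submodule.Quotient.mk (g1 𝕜 a b)) = β a b
    rw [hfdef, Submodule.liftQ_apply, hF0g1]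
  have hf2 : ∀ a b, f (t2 brL brL αL αL brL brL brL brL a b) = β a b := by
    intro a b
    show f (Submodule.Quotient.mk (g2 𝕜 a b)) = β a b
    rw [hfdef, Submodule.liftQ_apply, hF0g2]
  have hφf : ∀ t, φ (f t) = ψL t := by
    have h : φ.comp f = ψL := by
      apply LinearMap.ext_on hspan
      rintro x (⟨a, b, rfl⟩ | ⟨a, b, rfl⟩) <;>
        simp [hf1, hf2, hβφ, hψ1, hψ2]
    exact fun t => LinearMap.congr_fun h t
  have hβα : ∀ a b : L, β (αL a) (αL b) = αC (β a b) := by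
    intro a b
    rw [hβeq (αL a) (αL b) (αC (s a)) (αC (s b)) (by rw [hφα, hs]) (by rw [hφα, hs]),
      ← hC.2, hβ a b]
  have hfα : ∀ a, f (αT a) = αC (f a) := by
    have h : f.comp αT = αC.comp f := by
      apply LinearMap.ext_on hspan
      rintro x (⟨a, b, rfl⟩ | ⟨a, b, rfl⟩) <;>
        simp [hαT1, hαT2, hf1, hf2, hβα]
    exact fun a => LinearMap.congr_fun h a
  have hfBr : ∀ a b, f (Br a b) = brC (f a) (f b) := by
    intro a b
    rw [hBrψ a b, hf1]
    exact hβeq _ _ _ _ (hφf a) (hφf b)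
  -- uniqueness
  have hbrkt : ∀ (f' : HomTensor brL brL αL αL brL brL brL brL →ₗ[𝕜] C),
      (∀ a b, f' (Br a b) = brC (f' a) (f' b)) → (∀ t, φ (f' t) = ψL t) →
      ∀ x y x' y', f' (t1 brL brL αL αL brL brL brL brL (brL x y) (brL x' y'))
        = f (t1 brL brL αL αL brL brL brL brL (brL x y) (brL x' y')) := by
    intro f' hf'Br hf'φ x y x' y'
    rw [← hBr1 x y x' y', hf'Br, hfBr]
    exact key _ _ _ _ (by rw [hf'φ, hφf]) (by rw [hf'φ, hφf])
  have hall1 : ∀ (f' : HomTensor brL brL αL αL brL brL brL brL →ₗ[𝕜] C),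
      (∀ a b, f' (Br a b) = brC (f' a) (f' b)) → (∀ t, φ (f' t) = ψL t) →
      ∀ a b, f' (t1 brL brL αL αL brL brL brL brL a b)
        = f (t1 brL brL αL αL brL brL brL brL a b) := by
    intro f' hf'Br hf'φ a b
    have ha : a ∈ Submodule.span 𝕜 {z : L | ∃ x y, z = brL x y} :=
      hperf ▸ Submodule.mem_top
    have hb : b ∈ Submodule.span 𝕜 {z : L | ∃ x y, z = brL x y} :=
      hperf ▸ Submodule.mem_top
    induction ha using Submodule.span_induction with
    | mem x hx =>
        obtain ⟨u, v, rfl⟩ := hx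
        induction hb using Submodule.span_induction with
        | mem y hy =>
            obtain ⟨u', v', rfl⟩ := hy
            exact hbrkt f' hf'Br hf'φ u v u' v'
        | zero => rw [t1_zero_right, map_zero, map_zero]
        | add y y' hy hy' ihy ihy' => rw [t1_add_right, map_add, map_add, ihy, ihy']
        | smul c y hy ihy => rw [t1_smul_right, map_smul, map_smul, ihy]
    | zero => rw [t1_zero_left, map_zero, map_zero]
    | add x x' hx hx' ihx ihx' => rw [t1_add_left, map_add, map_add, ihx, ihx']
    | smul c x hx ihx => rw [t1_smul_left, map_smul, map_smul, ihx]
  have hall2 : ∀ (f' : HomTensor brL brL αL αL brL brL brL brL →ₗ[𝕜] C),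
      (∀ a b, f' (Br a b) = brC (f' a) (f' b)) → (∀ t, φ (f' t) = ψL t) →
      ∀ a b, f' (t2 brL brL αL αL brL brL brL brL a b)
        = f (t2 brL brL αL αL brL brL brL brL a b) := by
    intro f' hf'Br hf'φ a b
    have ha : a ∈ Submodule.span 𝕜 {z : L | ∃ x y, z = brL x y} :=
      hperf ▸ Submodule.mem_top
    have hb : b ∈ Submodule.span 𝕜 {z : L | ∃ x y, z = brL x y} :=
      hperf ▸ Submodule.mem_top
    induction ha using Submodule.span_induction with
    | mem x hx =>
        obtain ⟨u, v, rfl⟩ := hx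
        induction hb using Submodule.span_induction with
        | mem y hy =>
            obtain ⟨u', v', rfl⟩ := hy
            rw [t2_bracket_eq_t1]
            exact hbrkt f' hf'Br hf'φ u v u' v'
        | zero => rw [t2_zero_right, map_zero, map_zero]
        | add y y' hy hy' ihy ihy' => rw [t2_add_right, map_add, map_add, ihy, ihy']
        | smul c y hy ihy => rw [t2_smul_right, map_smul, map_smul, ihy]
    | zero => rw [t2_zero_left, map_zero, map_zero]
    | add x x' hx hx' ihx ihx' => rw [t2_add_left, map_add, map_add, ihx, ihx']
    | smul c x hx ihx => rw [t2_smul_left, map_smul, map_smul, ihx]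
  refine ⟨hsurj, hcent, hψα, hψBr, f, ⟨hfBr, hfα, hφf⟩, ?_⟩
  rintro f' ⟨hf'Br, hf'α, hf'φ⟩
  apply LinearMap.ext_on hspan
  rintro x (⟨a, b, rfl⟩ | ⟨a, b, rfl⟩)
  · exact hall1 f' hf'Br hf'φ a b
  · exact hall2 f' hf'Br hf'φ a b
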